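/- arXiv:1804.07024 — 3 statements merged into one kernel-verified Lean document; each statement's English description precedes it below -/
import Mathlib

section
/- The lattice T_δ(ℤ^d) with δ = √(d+1) is isometric (as a metric space with the Euclidean metric) to the root lattice A_d = {x ∈ ℤ^{d+1} : Σᵢ xᵢ = 0}. -/
open Finset

/-- The lattice `T_δ(ℤ^d)` with `δ = √(d+1)`, where
`T_δ(x) = x - ((1-δ)/d)·(∑ xⱼ)·𝟙`, is isometric (with the Euclidean metric) to the
root lattice `A_d = {x ∈ ℤ^{d+1} : ∑ xᵢ = 0}`. -/
theorem stmt_3 (d : ℕ) (hd : 0 < d) :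
    let γ : ℝ := Real.sqrt (d + 1)
    let L : Set (EuclideanSpace ℝ (Fin d)) :=
      {y | ∃ X : Fin d → ℤ, ∀ k, y k = (X k : ℝ) - ((1 - γ) / d) * ∑ j, (X j : ℝ)}
    let A : Set (EuclideanSpace ℝ (Fin (d + 1))) :=
      {y | (∃ X : Fin (d + 1) → ℤ, ∀ k, y k = (X k : ℝ)) ∧ ∑ k, y k = 0}
    Nonempty (L ≃ᵢ A) := by
  intro γ L A
  have hdR : (0:ℝ) < d := by exact_mod_cast hd
  have hd0 : (d:ℝ) ≠ 0 := ne_of_gt hdR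
  have hγpos : 0 < γ := Real.sqrt_pos.mpr (by positivity)
  have hγ0 : γ ≠ 0 := ne_of_gt hγpos
  have hγ2 : γ ^ 2 = d + 1 := Real.sq_sqrt (by positivity)
  set c : ℝ := (1 - γ) / (d * γ) with hc
  set b : ℝ := (1 - γ) / d with hb
  have hbc : b = c * γ := by rw [hb, hc]; field_simp
  -- forward map
  let f : EuclideanSpace ℝ (Fin d) → EuclideanSpace ℝ (Fin (d + 1)) :=
    fun y => WithLp.toLp 2 (Fin.snoc (fun k => y k + c * ∑ j, y j) (-(∑ j, y j) / γ))
  -- inverse map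
  let g : EuclideanSpace ℝ (Fin (d + 1)) → EuclideanSpace ℝ (Fin d) :=
    fun z => WithLp.toLp 2 (fun k => z k.castSucc + b * z (Fin.last d))
  have hf_cast : ∀ y (k : Fin d), f y k.castSucc = y k + c * ∑ j, y j := by
    intro y k; simp [f]
  have hf_last : ∀ y, f y (Fin.last d) = -(∑ j, y j) / γ := by
    intro y; simp [f]
  -- the sum of coordinates of f y is always 0
  have hfsum : ∀ y, ∑ k, f y k = 0 := by
    intro y
    rw [Fin.sum_univ_castSucc]
    simp only [hf_cast, hf_last]
    rw [Finset.sum_add_distrib, Finset.sum_const, card_univ, Fintype.card_fin,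
      nsmul_eq_mul]
    rw [hc]; field_simp; ring
  -- f maps L into A
  have hfL : ∀ y ∈ L, f y ∈ A := by
    intro y hy
    obtain ⟨X, hX⟩ := hy
    have hsum : ∑ j, y j = γ * ∑ j, (X j : ℝ) := by
      rw [Finset.sum_congr rfl fun j _ => hX j]
      rw [Finset.sum_sub_distrib, Finset.sum_const, card_univ, Fintype.card_fin,
        nsmul_eq_mul]
      field_simp; ring
    refine ⟨⟨Fin.snoc X (-∑ j, X j), ?_⟩, hfsum y⟩
    intro k
    refine Fin.lastCases ?_ ?_ k
    · rw [hf_last, hsum]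
      simp [Fin.snoc_last]
      field_simp
    · intro i
      rw [hf_cast, hX i, hsum]
      simp only [Fin.snoc_castSucc]
      rw [hc]
      field_simp
      ring
  -- g maps A into L
  have hgA : ∀ z ∈ A, g z ∈ L := by
    intro z hz
    obtain ⟨⟨X, hX⟩, hzsum⟩ := hz
    refine ⟨fun k => X k.castSucc, ?_⟩
    intro k
    have hlast : (X (Fin.last d) : ℝ) = -∑ j, (X (Fin.castSucc j) : ℝ) := by
      have := hzsum
      rw [Fin.sum_univ_castSucc] at this
      have h1 : ∑ i : Fin d, z (Fin.castSucc i) = ∑ i : Fin d, (X (Fin.castSucc i) : ℝ) :=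
        Finset.sum_congr rfl fun i _ => hX _
      rw [h1, hX (Fin.last d)] at this
      linarith
    show z k.castSucc + b * z (Fin.last d) = _
    rw [hX, hX, hlast, hb]
    ring
  -- g ∘ f = id
  have hgf : ∀ y, g (f y) = y := by
    intro y
    ext k
    show f y k.castSucc + b * f y (Fin.last d) = y k
    rw [hf_cast, hf_last, hbc]
    field_simp
    ring
  -- f ∘ g = id on A
  have hfg : ∀ z, (∑ k, z k) = 0 → f (g z) = z := by
    intro z hz
    have hsum : ∑ k, g z k = -γ * z (Fin.last d) := by
      have h1 : ∑ k : Fin d, z (Fin.castSucc k) = -z (Fin.last d) := by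
        rw [Fin.sum_univ_castSucc] at hz; linarith
      show ∑ k : Fin d, (z k.castSucc + b * z (Fin.last d)) = _
      rw [Finset.sum_add_distrib, Finset.sum_const, card_univ, Fintype.card_fin,
        nsmul_eq_mul, h1, hb]
      field_simp; ring
    ext k
    refine Fin.lastCases ?_ ?_ k
    · rw [hf_last, hsum]; field_simp
    · intro i
      rw [hf_cast, hsum]
      show z i.castSucc + b * z (Fin.last d) + c * (-γ * z (Fin.last d)) = _
      rw [hbc]; ring
  -- f preserves distances
  have hdist : ∀ x y, dist (f x) (f y) = dist x y := by
    intro x y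
    rw [EuclideanSpace.dist_eq, EuclideanSpace.dist_eq]
    congr 1
    have key : (2 * c + d * c ^ 2 + 1 / γ ^ 2) = 0 := by
      rw [hc]
      field_simp
      ring_nf
      linear_combination (-1:ℝ)*hγ2
    rw [Fin.sum_univ_castSucc]
    simp only [hf_cast, hf_last, Real.dist_eq, sq_abs]
    have hU : ∑ j, (x j - y j) = (∑ j, x j) - ∑ j, y j := by
      rw [Finset.sum_sub_distrib]
    set U : ℝ := (∑ j, x j) - ∑ j, y j with hUdef
    have h1 : ∀ k : Fin d, ((x k + c * ∑ j, x j) - (y k + c * ∑ j, y j)) ^ 2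
        = (x k - y k) ^ 2 + 2 * c * U * (x k - y k) + (c * U) ^ 2 := by
      intro k; rw [hUdef]; ring
    have h2 : (-(∑ j, x j) / γ - -(∑ j, y j) / γ) ^ 2 = U ^ 2 / γ ^ 2 := by
      rw [hUdef]; field_simp; ring
    rw [Finset.sum_congr rfl fun k _ => h1 k, h2, Finset.sum_add_distrib,
      Finset.sum_add_distrib, ← Finset.mul_sum, hU, Finset.sum_const,
      card_univ, Fintype.card_fin, nsmul_eq_mul]
    linear_combination U ^ 2 * key
  exact ⟨{
    toFun := fun y => ⟨f y, hfL y y.2⟩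
    invFun := fun z => ⟨g z, hgA z z.2⟩
    left_inv := fun y => Subtype.ext (hgf y)
    right_inv := fun z => Subtype.ext (hfg z z.2.2)
    isometry_toFun := Isometry.of_dist_eq fun a b => by
      rw [Subtype.dist_eq, Subtype.dist_eq]
      exact hdist a b }⟩
end

section
/- For the distorted Freudenthal simplex σ_δ in ℝ^d with 0 < δ ≤ 1, the distance from vertex v^0_δ = 0 to the affine hyperplane through the other d vertices equals δ√d / √(δ²d - δ² + 1), and for 1 ≤ i ≤ d-1 the distance from v^i_δ to the affine hyperplane through the other vertices equals 1/√2. -/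
open Finset Metric
open scoped RealInnerProductSpace

/-- Vertices of the diagonally distorted Freudenthal simplex:
`v^i_δ = T_δ(v^i)` where `v^i ∈ {0,1}^d` has its last `i` coordinates equal to `1`,
i.e. `v^i_δ = (1/d)·(-i+iδ,…,-i+iδ, d-i+iδ,…,d-i+iδ)` with `d-i` copies of the first
value and `i` copies of the second. -/
noncomputable def vFT (d : ℕ) (δ : ℝ) (i : Fin (d + 1)) : EuclideanSpace ℝ (Fin d) :=
  WithLp.toLp 2 fun k => (if d - (i : ℕ) ≤ (k : ℕ) then (1 : ℝ) else 0) - ((1 - δ) / d) * (i : ℕ)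

/-- The point `C_δ = δ²·(1/2,…,1/2) + (1-δ²)·(1/(2d))·(-d+1, -d+3, …, d-3, d-1)`. -/
noncomputable def cFT (d : ℕ) (δ : ℝ) : EuclideanSpace ℝ (Fin d) :=
  WithLp.toLp 2 fun k => δ ^ 2 * (1 / 2) + (1 - δ ^ 2) * ((-(d : ℝ) + 1 + 2 * (k : ℕ)) / (2 * d))


/-- The hyperplane `{x | ⟪n,x⟫ = c}` as an affine subspace. -/
noncomputable def hplane {E : Type*} [NormedAddCommGroup E] [InnerProductSpace ℝ E]
    (n : E) (c : ℝ) : AffineSubspace ℝ E where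
  carrier := {x | ⟪n, x⟫ = c}
  smul_vsub_vadd_mem' t {a b x} ha hb hx := by
    simp only [Set.mem_setOf_eq] at *
    simp [vsub_eq_sub, vadd_eq_add, inner_add_right, inner_sub_right,
      real_inner_smul_right, ha, hb, hx]

lemma infDist_eq_of_hplane {E : Type*} [NormedAddCommGroup E] [InnerProductSpace ℝ E]
    {n p q : E} {c : ℝ} {S : Set E}
    (hS : ∀ x ∈ S, ⟪n, x⟫ = c) (hq : q ∈ affineSpan ℝ S)
    (hdq : dist p q = |⟪n, p⟫ - c| / ‖n‖) :
    Metric.infDist p (affineSpan ℝ S : Set E) = |⟪n, p⟫ - c| / ‖n‖ := by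
  have hsub : affineSpan ℝ S ≤ hplane n c := affineSpan_le.2 hS
  refine le_antisymm ((infDist_le_dist_of_mem hq).trans_eq hdq) ?_
  by_contra h
  push_neg at h
  obtain ⟨y, hy, hlt⟩ := (infDist_lt_iff ⟨q, hq⟩).1 h
  have hyc : ⟪n, y⟫ = c := hsub hy
  have h1 : |⟪n, p⟫ - c| ≤ ‖n‖ * dist p y := by
    calc |⟪n, p⟫ - c| = |⟪n, p - y⟫| := by rw [inner_sub_right, hyc]
    _ ≤ ‖n‖ * ‖p - y‖ := abs_real_inner_le_norm n _
    _ = ‖n‖ * dist p y := by rw [dist_eq_norm]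
  rcases eq_or_lt_of_le (norm_nonneg n) with h0 | h0
  · rw [← h0, div_zero] at hlt
    exact absurd hlt (not_lt.2 dist_nonneg)
  · have h2 : |⟪n, p⟫ - c| / ‖n‖ ≤ dist p y := by
      rw [div_le_iff₀ h0]
      nlinarith
    exact absurd hlt (not_lt.2 h2)
open scoped RealInnerProductSpace

lemma sum_pair_mul (d : ℕ) (K1 K2 : Fin d) (v : Fin d → ℝ) :
    ∑ k, ((if k = K1 then (1:ℝ) else 0) - (if k = K2 then 1 else 0)) * v k = v K1 - v K2 := by
  simp [sub_mul, Finset.sum_sub_distrib, ite_mul, Finset.sum_ite_eq']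

set_option maxHeartbeats 1000000 in
lemma caseI (d : ℕ) (hd : 0 < d) (δ : ℝ) (i : Fin (d + 1))
    (hi1 : 1 ≤ (i : ℕ)) (hi2 : (i : ℕ) ≤ d - 1) :
    Metric.infDist (vFT d δ i)
        (affineSpan ℝ (vFT d δ '' {j | j ≠ i}) : Set (EuclideanSpace ℝ (Fin d))) =
      1 / Real.sqrt 2 := by
  have hd2 : 2 ≤ d := by omega
  set K1 : Fin d := ⟨d - i, by omega⟩ with hK1
  set K2 : Fin d := ⟨d - 1 - i, by omega⟩ with hK2
  set n : EuclideanSpace ℝ (Fin d) :=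
    WithLp.toLp 2 (fun k => (if k = K1 then (1:ℝ) else 0) - (if k = K2 then 1 else 0)) with hn
  have hinner : ∀ v : EuclideanSpace ℝ (Fin d), ⟪n, v⟫ = v K1 - v K2 := by
    intro v
    simp only [PiLp.inner_apply, RCLike.inner_apply, conj_trivial, hn]
    simp only [mul_comm (WithLp.ofLp v _)]
    exact sum_pair_mul d K1 K2 v
  have hS : ∀ x ∈ vFT d δ '' {j | j ≠ i}, ⟪n, x⟫ = 0 := by
    rintro x ⟨j, hj, rfl⟩
    have hji : (j : ℕ) ≠ (i : ℕ) := fun h => hj (Fin.ext h)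
    have hjd : (j : ℕ) < d + 1 := j.isLt
    rw [hinner]
    simp only [vFT]
    rcases lt_or_gt_of_ne hji with h | h
    · rw [if_neg (by simp [hK1]; omega), if_neg (by simp [hK2]; omega)]; ring
    · rw [if_pos (by simp [hK1]; omega), if_pos (by simp [hK2]; omega)]; ring
  have hp : ⟪n, vFT d δ i⟫ = 1 := by
    rw [hinner]
    simp only [vFT]
    rw [if_pos (by simp [hK1]), if_neg (by simp [hK2]; omega)]; ring
  have h12 : K1 ≠ K2 := by simp [hK1, hK2, Fin.ext_iff]; omega
  have hnn : ⟪n, n⟫ = 2 := by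
    rw [hinner, hn]
    simp only [if_pos rfl, if_neg h12, if_neg (Ne.symm h12)]
    norm_num
  have hnorm : ‖n‖ = Real.sqrt 2 := by
    rw [show (2:ℝ) = ‖n‖ ^ 2 by rw [sq, ← real_inner_self_eq_norm_mul_norm, hnn],
      Real.sqrt_sq (norm_nonneg n)]
  obtain ⟨im, him⟩ : {x : Fin (d+1) // (x:ℕ) = (i:ℕ) - 1} := ⟨⟨(i:ℕ) - 1, by omega⟩, rfl⟩
  obtain ⟨ip, hip⟩ : {x : Fin (d+1) // (x:ℕ) = (i:ℕ) + 1} := ⟨⟨(i:ℕ) + 1, by omega⟩, rfl⟩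
  obtain ⟨q, hq⟩ : {x : EuclideanSpace ℝ (Fin d) //
      x = (2:ℝ)⁻¹ • (vFT d δ ip -ᵥ vFT d δ im) +ᵥ vFT d δ im} := ⟨_, rfl⟩
  have hqmem : q ∈ affineSpan ℝ (vFT d δ '' {j | j ≠ i}) := by
    have h1 : vFT d δ ip ∈ affineSpan ℝ (vFT d δ '' {j | j ≠ i}) :=
      subset_affineSpan ℝ _ (Set.mem_image_of_mem _
        (by simp only [Set.mem_setOf_eq, ne_eq, Fin.ext_iff, hip]; omega))
    have h2 : vFT d δ im ∈ affineSpan ℝ (vFT d δ '' {j | j ≠ i}) :=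
      subset_affineSpan ℝ _ (Set.mem_image_of_mem _
        (by simp only [Set.mem_setOf_eq, ne_eq, Fin.ext_iff, him]; omega))
    rw [hq]
    exact AffineSubspace.smul_vsub_vadd_mem _ _ h1 h2 h2
  have hdq : dist (vFT d δ i) q = 1 / Real.sqrt 2 := by
    rw [EuclideanSpace.dist_eq]
    have hterm : ∀ k : Fin d, dist (vFT d δ i k) (q k) ^ 2 =
        (if k = K1 then (1/4 : ℝ) else 0) + (if k = K2 then (1/4:ℝ) else 0) := by
      intro k
      have hk := k.isLt
      rw [Real.dist_eq, sq_abs, hq]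
      simp only [vsub_eq_sub, vadd_eq_add, PiLp.add_apply, PiLp.smul_apply, PiLp.sub_apply,
        smul_eq_mul, vFT, hip, him]
      have c1 : (((i:ℕ) + 1 : ℕ) : ℝ) = ((i:ℕ) : ℝ) + 1 := by push_cast; ring
      have c2 : (((i:ℕ) - 1 : ℕ) : ℝ) = ((i:ℕ) : ℝ) - 1 := by
        rw [Nat.cast_sub hi1]; norm_num
      rw [c1, c2]
      by_cases e1 : k = K1
      · have hkv : (k : ℕ) = d - (i:ℕ) := by rw [e1, hK1]
        rw [if_pos (by omega : d - (i:ℕ) ≤ (k:ℕ)), if_pos (by omega : d - ((i:ℕ)+1) ≤ (k:ℕ)),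
          if_neg (by omega : ¬ d - ((i:ℕ)-1) ≤ (k:ℕ)),
          if_pos e1, if_neg (by rw [e1]; exact h12)]
        ring
      · have hkv : (k : ℕ) ≠ d - (i:ℕ) := fun h => e1 (Fin.ext h)
        by_cases e2 : k = K2
        · have hkv2 : (k : ℕ) = d - 1 - (i:ℕ) := by rw [e2, hK2]
          rw [if_neg (by omega : ¬ d - (i:ℕ) ≤ (k:ℕ)), if_pos (by omega : d - ((i:ℕ)+1) ≤ (k:ℕ)),
            if_neg (by omega : ¬ d - ((i:ℕ)-1) ≤ (k:ℕ)), if_neg e1, if_pos e2]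
          ring
        · have hkv2 : (k : ℕ) ≠ d - 1 - (i:ℕ) := fun h => e2 (Fin.ext h)
          rw [if_neg e1, if_neg e2]
          by_cases h3 : (k : ℕ) < d - 1 - (i:ℕ)
          · rw [if_neg (by omega : ¬ d - (i:ℕ) ≤ (k:ℕ)), if_neg (by omega : ¬ d - ((i:ℕ)+1) ≤ (k:ℕ)),
              if_neg (by omega : ¬ d - ((i:ℕ)-1) ≤ (k:ℕ))]
            ring
          · rw [if_pos (by omega : d - (i:ℕ) ≤ (k:ℕ)), if_pos (by omega : d - ((i:ℕ)+1) ≤ (k:ℕ)),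
              if_pos (by omega : d - ((i:ℕ)-1) ≤ (k:ℕ))]
            ring
    rw [Finset.sum_congr rfl (fun k _ => hterm k), Finset.sum_add_distrib,
      Finset.sum_ite_eq' Finset.univ K1 (fun _ => (1/4:ℝ)),
      Finset.sum_ite_eq' Finset.univ K2 (fun _ => (1/4:ℝ))]
    simp only [Finset.mem_univ, if_pos]
    rw [show (1/4 : ℝ) + 1/4 = 2⁻¹ by norm_num, Real.sqrt_inv, one_div]
  have := infDist_eq_of_hplane (p := vFT d δ i) (c := 0) hS hqmem
    (by rw [hp, hnorm]; simpa using hdq)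
  rw [this, hp, hnorm]
  norm_num

lemma sum_indicator (d j : ℕ) (hj : j ≤ d) :
    ∑ k : Fin d, (if d - j ≤ (k:ℕ) then (1:ℝ) else 0) = j := by
  rw [Fin.sum_univ_eq_sum_range (fun k => if d - j ≤ k then (1:ℝ) else 0), Finset.sum_boole,
    Finset.range_eq_Ico, Finset.Ico_filter_le 0 d (d - j), Nat.card_Ico]
  have : d - (max 0 (d - j)) = j := by omega
  rw [this]

lemma case0 (d : ℕ) (hd : 0 < d) (δ : ℝ) (h0 : 0 < δ) (h1 : δ ≤ 1) :
    Metric.infDist (vFT d δ 0)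
        (affineSpan ℝ (vFT d δ '' {j | j ≠ 0}) : Set (EuclideanSpace ℝ (Fin d))) =
      δ * Real.sqrt d / Real.sqrt (δ ^ 2 * d - δ ^ 2 + 1) := by
  have hd0 : (d:ℝ) ≠ 0 := Nat.cast_ne_zero.2 hd.ne'
  have hd1 : (1:ℝ) ≤ (d:ℝ) := by exact_mod_cast hd
  set D : ℝ := δ ^ 2 * d - δ ^ 2 + 1 with hDdef
  have hD : 0 < D := by nlinarith [sq_nonneg δ]
  set K : Fin d := ⟨d - 1, by omega⟩ with hK
  set n : EuclideanSpace ℝ (Fin d) :=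
    WithLp.toLp 2 (fun k => (1 - δ) + (if k = K then δ * (d:ℝ) else 0)) with hn
  have hinner : ∀ v : EuclideanSpace ℝ (Fin d),
      ⟪n, v⟫ = (1 - δ) * (∑ k, v k) + δ * d * v K := by
    intro v
    simp only [PiLp.inner_apply, RCLike.inner_apply, conj_trivial, hn]
    have h : ∀ k : Fin d, ((1 - δ) + (if k = K then δ * (d:ℝ) else 0)) * v k
        = (1 - δ) * v k + (if k = K then δ * (d:ℝ) * v k else 0) := by
      intro k; split_ifs <;> ring
    simp only [mul_comm (WithLp.ofLp v _)]
    rw [Finset.sum_congr rfl fun k _ => h k, Finset.sum_add_distrib, ← Finset.mul_sum,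
      Finset.sum_ite_eq' Finset.univ K (fun k => δ * (d:ℝ) * v k)]
    simp
  have hsum : ∀ j : Fin (d+1), ∑ k, vFT d δ j k = δ * j := by
    intro j
    have hjd : (j : ℕ) ≤ d := by omega
    simp only [vFT]
    rw [Finset.sum_sub_distrib, sum_indicator d j hjd, Finset.sum_const, Finset.card_univ,
      Fintype.card_fin, nsmul_eq_mul]
    field_simp
    ring
  have hS : ∀ x ∈ vFT d δ '' {j | j ≠ 0}, ⟪n, x⟫ = δ * d := by
    rintro x ⟨j, hj, rfl⟩
    have hj1 : 1 ≤ (j:ℕ) := by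
      have : (j:ℕ) ≠ 0 := fun h => hj (Fin.ext (by simpa using h))
      omega
    have hjd : (j : ℕ) ≤ d := by omega
    rw [hinner, hsum]
    have hvK : vFT d δ j K = 1 - (1-δ)/d * j := by
      simp only [vFT, hK]
      rw [if_pos (by omega : d - (j:ℕ) ≤ d - 1)]
    rw [hvK]
    field_simp
    ring
  have hz : vFT d δ 0 = 0 := by
    ext k
    have hk := k.isLt
    simp only [vFT, Fin.val_zero, Nat.sub_zero, Nat.cast_zero, mul_zero]
    simp only [show ¬ d ≤ (k:ℕ) by omega, if_false]
    simp
  have hp : ⟪n, vFT d δ 0⟫ = 0 := by rw [hz, inner_zero_right]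
  have hnK : n K = (1 - δ) + δ * d := by rw [hn]; simp
  have hnsum : ∑ k, n k = d * (1 - δ) + δ * d := by
    rw [hn]
    rw [Finset.sum_add_distrib, Finset.sum_const, Finset.card_univ, Fintype.card_fin,
      nsmul_eq_mul, Finset.sum_ite_eq' Finset.univ K (fun _ => δ * (d:ℝ))]
    simp
  have hnn : ⟪n, n⟫ = d * D := by
    rw [hinner, hnsum, hnK, hDdef]; ring
  have hn2 : ‖n‖ ^ 2 = d * D := by
    rw [sq, ← real_inner_self_eq_norm_mul_norm, hnn]
  have hdD : (0:ℝ) < d * D := by positivity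
  have hnpos : 0 < ‖n‖ := by
    have h : 0 < ‖n‖ ^ 2 := by rw [hn2]; exact hdD
    nlinarith [norm_nonneg n]
  have hnorm : ‖n‖ = Real.sqrt (d * D) := by
    rw [← hn2, Real.sqrt_sq (norm_nonneg n)]
  -- the foot of the perpendicular
  obtain ⟨oneI, honeI⟩ : {x : Fin (d+1) // (x:ℕ) = 1} := ⟨⟨1, by omega⟩, rfl⟩
  obtain ⟨dI, hdI⟩ : {x : Fin (d+1) // (x:ℕ) = d} := ⟨⟨d, by omega⟩, rfl⟩
  set t : ℝ := δ / D with ht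
  set s : ℝ := (1 - δ^2) / D with hs
  obtain ⟨q, hq⟩ : {x : EuclideanSpace ℝ (Fin d) //
      x = s • (vFT d δ dI -ᵥ vFT d δ oneI) +ᵥ vFT d δ oneI} := ⟨_, rfl⟩
  have hqmem : q ∈ affineSpan ℝ (vFT d δ '' {j | j ≠ 0}) := by
    have h1 : vFT d δ oneI ∈ affineSpan ℝ (vFT d δ '' {j | j ≠ 0}) :=
      subset_affineSpan ℝ _ (Set.mem_image_of_mem _
        (by simp only [Set.mem_setOf_eq, ne_eq, Fin.ext_iff, honeI, Fin.val_zero]; omega))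
    have h2 : vFT d δ dI ∈ affineSpan ℝ (vFT d δ '' {j | j ≠ 0}) :=
      subset_affineSpan ℝ _ (Set.mem_image_of_mem _
        (by simp only [Set.mem_setOf_eq, ne_eq, Fin.ext_iff, hdI, Fin.val_zero]; omega))
    rw [hq]
    exact AffineSubspace.smul_vsub_vadd_mem _ _ h2 h1 h1
  have hqt : q = t • n := by
    rw [hq]
    ext k
    have hk := k.isLt
    simp only [vsub_eq_sub, vadd_eq_add, PiLp.add_apply, PiLp.smul_apply, PiLp.sub_apply,
      smul_eq_mul, vFT, hn, honeI, hdI, Nat.cast_one, Nat.sub_self]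
    rw [if_pos (Nat.zero_le _), ht, hs, hDdef]
    push_cast
    have hD' : (δ ^ 2 * ((d:ℝ) - 1) + 1) ≠ 0 := by nlinarith [hD, hDdef]
    by_cases e : k = K
    · have hkv : (k:ℕ) = d - 1 := by rw [e, hK]
      rw [if_pos (by omega : d - 1 ≤ (k:ℕ)), if_pos e]
      field_simp
      ring
    · have hkv : (k:ℕ) ≠ d - 1 := fun h => e (Fin.ext h)
      rw [if_neg (by omega : ¬ d - 1 ≤ (k:ℕ)), if_neg e]
      field_simp
      ring
  have hdq : dist (vFT d δ 0) q = |⟪n, vFT d δ 0⟫ - δ * d| / ‖n‖ := by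
    rw [hp, hz, hqt, dist_eq_norm, zero_sub, norm_neg, norm_smul, Real.norm_eq_abs,
      abs_of_nonneg (by positivity : (0:ℝ) ≤ t), zero_sub, abs_neg,
      abs_of_nonneg (by positivity : (0:ℝ) ≤ δ * d), eq_div_iff hnpos.ne', mul_assoc,
      ← sq, hn2, ht]
    field_simp
  rw [infDist_eq_of_hplane hS hqmem hdq, hp, zero_sub, abs_neg,
    abs_of_nonneg (by positivity : (0:ℝ) ≤ δ * d), hnorm,
    Real.sqrt_mul (by positivity : (0:ℝ) ≤ (d:ℝ))]
  have hsd : 0 < Real.sqrt d := Real.sqrt_pos.2 (by positivity)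
  have hsD : 0 < Real.sqrt D := Real.sqrt_pos.2 hD
  rw [div_eq_div_iff (by positivity) hsD.ne']
  have hdd : Real.sqrt d * Real.sqrt d = (d:ℝ) := Real.mul_self_sqrt (by positivity)
  linear_combination (-(δ * Real.sqrt D)) * hdd

/-- in the distorted Freudenthal simplex (`0 < δ ≤ 1`), the distance
from `v^0_δ = 0` to the affine hyperplane through the other `d` vertices equals
`δ√d / √(δ²d - δ² + 1)`, and for `1 ≤ i ≤ d-1` the distance from `v^i_δ` to the
affine hyperplane through the other vertices equals `1/√2`. -/
theorem stmt_10 (d : ℕ) (hd : 0 < d) (δ : ℝ) (h0 : 0 < δ) (h1 : δ ≤ 1) :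
    Metric.infDist (vFT d δ 0)
        (affineSpan ℝ (vFT d δ '' {j | j ≠ 0}) : Set (EuclideanSpace ℝ (Fin d))) =
      δ * Real.sqrt d / Real.sqrt (δ ^ 2 * d - δ ^ 2 + 1) ∧
    ∀ i : Fin (d + 1), 1 ≤ (i : ℕ) → (i : ℕ) ≤ d - 1 →
      Metric.infDist (vFT d δ i)
          (affineSpan ℝ (vFT d δ '' {j | j ≠ i}) : Set (EuclideanSpace ℝ (Fin d))) =
        1 / Real.sqrt 2 := by
  exact ⟨case0 d hd δ h0 h1, fun i hi1 hi2 => caseI d hd δ i hi1 hi2⟩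
end

section
/- For 0 < δ ≤ 1, the altitude h₀(δ) = δ√d/√(δ²d - δ² + 1) of the distorted Freudenthal simplex is strictly increasing in δ, with h₀(0)=0, h₀(1/√(d+1)) = 1/√2, and h₀(1) = 1. -/
/-- the altitude `h₀(δ) = δ√d/√(δ²d - δ² + 1)` of the distorted
Freudenthal simplex is strictly increasing in `δ` on `[0,1]`, with `h₀(0) = 0`,
`h₀(1/√(d+1)) = 1/√2`, and `h₀(1) = 1`. -/
theorem stmt_16 (d : ℕ) (hd : 1 ≤ d) :
    let h : ℝ → ℝ := fun δ => δ * Real.sqrt d / Real.sqrt (δ ^ 2 * d - δ ^ 2 + 1)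
    StrictMonoOn h (Set.Icc 0 1) ∧ h 0 = 0 ∧
      h (1 / Real.sqrt (d + 1)) = 1 / Real.sqrt 2 ∧ h 1 = 1 := by
  intro h
  have hd1 : (1:ℝ) ≤ (d:ℝ) := by exact_mod_cast hd
  have hdpos : (0:ℝ) < (d:ℝ) := by linarith
  refine ⟨?_, ?_, ?_, ?_⟩
  · intro a ha b hb hab
    have ha0 : (0:ℝ) ≤ a := ha.1
    have hb0 : (0:ℝ) ≤ b := hb.1
    have hA : (0:ℝ) < a ^ 2 * (d:ℝ) - a ^ 2 + 1 := by nlinarith [sq_nonneg a]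
    have hB : (0:ℝ) < b ^ 2 * (d:ℝ) - b ^ 2 + 1 := by nlinarith [sq_nonneg b]
    have hsA := Real.sqrt_pos.mpr hA
    have hsB := Real.sqrt_pos.mpr hB
    show a * Real.sqrt d / Real.sqrt (a ^ 2 * d - a ^ 2 + 1)
        < b * Real.sqrt d / Real.sqrt (b ^ 2 * d - b ^ 2 + 1)
    rw [div_lt_div_iff₀ hsA hsB]
    have e1 : a * Real.sqrt d * Real.sqrt (b ^ 2 * d - b ^ 2 + 1)
        = Real.sqrt (a ^ 2 * d * (b ^ 2 * d - b ^ 2 + 1)) := by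
      rw [Real.sqrt_mul (by positivity : (0:ℝ) ≤ a ^ 2 * d),
        Real.sqrt_mul (sq_nonneg a), Real.sqrt_sq ha0]
    have e2 : b * Real.sqrt d * Real.sqrt (a ^ 2 * d - a ^ 2 + 1)
        = Real.sqrt (b ^ 2 * d * (a ^ 2 * d - a ^ 2 + 1)) := by
      rw [Real.sqrt_mul (by positivity : (0:ℝ) ≤ b ^ 2 * d),
        Real.sqrt_mul (sq_nonneg b), Real.sqrt_sq hb0]
    rw [e1, e2]
    have hab2 : a ^ 2 < b ^ 2 := by nlinarith
    exact Real.sqrt_lt_sqrt (by positivity)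
      (by nlinarith [mul_lt_mul_of_pos_right hab2 hdpos])
  · show (0:ℝ) * Real.sqrt d / Real.sqrt ((0:ℝ) ^ 2 * d - (0:ℝ) ^ 2 + 1) = 0
    simp
  · show (1 / Real.sqrt (d + 1)) * Real.sqrt d
        / Real.sqrt ((1 / Real.sqrt (d + 1)) ^ 2 * d - (1 / Real.sqrt (d + 1)) ^ 2 + 1)
        = 1 / Real.sqrt 2
    have hd1pos : (0:ℝ) < (d:ℝ) + 1 := by linarith
    have hs : Real.sqrt ((d:ℝ) + 1) ≠ 0 := by positivity
    have hE : (1 / Real.sqrt ((d:ℝ) + 1)) ^ 2 * d - (1 / Real.sqrt ((d:ℝ) + 1)) ^ 2 + 1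
        = 2 * d / ((d:ℝ) + 1) := by
      rw [div_pow, one_pow, Real.sq_sqrt (le_of_lt hd1pos)]
      field_simp
      ring
    rw [hE, Real.sqrt_div (by positivity : (0:ℝ) ≤ 2 * (d:ℝ)),
      Real.sqrt_mul (by norm_num : (0:ℝ) ≤ 2)]
    have h2 : Real.sqrt 2 ≠ 0 := by positivity
    have hsd : Real.sqrt (d:ℝ) ≠ 0 := by positivity
    field_simp
  · show (1:ℝ) * Real.sqrt d / Real.sqrt ((1:ℝ) ^ 2 * d - (1:ℝ) ^ 2 + 1) = 1
    have : (1:ℝ) ^ 2 * d - (1:ℝ) ^ 2 + 1 = d := by ring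
    rw [this, one_mul, div_self (by positivity)]
end
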